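/- Let G be an aADMG (an ADMG with no bidirected edges) and let G_4' be the graph obtained from an ADMG by replacing every bidirected edge A↔B with A←λ_{AB}→B for fresh nodes λ_{AB}. Then any route in the original ADMG connecting α and β given Z ⊆ V \ {α,β} can be transformed into a route in G_4' connecting α and β given Z by replacing each traversed bidirected edge A↔B with the subroute A←λ_{AB}→B, and this transformed route is Z-connecting. -/

import Mathlib

open scoped Classical
open MeasureTheory ProbabilityTheory

noncomputable section

/-- A mixed graph over a node set `V`, with directed (`dir`), undirected (`undir`)
and bidirected (`bidir`) edges. -/
structure MixedGraph (V : Type*) where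
  dir : V → V → Prop
  undir : V → V → Prop
  bidir : V → V → Prop

namespace MixedGraph

variable {V : Type*}

/-- An ADMG: symmetric undirected/bidirected edges, no self loops, no directed cycles. -/
def WellFormed (G : MixedGraph V) : Prop :=
  (∀ a b, G.undir a b → G.undir b a) ∧
  (∀ a b, G.bidir a b → G.bidir b a) ∧
  (∀ a, ¬ G.dir a a) ∧ (∀ a, ¬ G.undir a a) ∧ (∀ a, ¬ G.bidir a a) ∧
  (∀ a, ¬ Relation.TransGen G.dir a a)

/-- An aADMG has no bidirected edges. -/
def NoBidirected (G : MixedGraph V) : Prop := ∀ a b, ¬ G.bidir a b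

/-- The kind of an edge traversed from left to right along a route. -/
inductive Step : Type
  | fwd | bwd | bi | un
deriving DecidableEq

/-- Validity of traversing from `x` to `y` by a step of the given kind. -/
def StepValid (G : MixedGraph V) (x : V) : Step → V → Prop
  | Step.fwd, y => G.dir x y
  | Step.bwd, y => G.dir y x
  | Step.bi, y => G.bidir x y
  | Step.un, y => G.undir x y

/-- A route between `α` and `β`: a sequence of (not necessarily distinct) nodes
`nodes 0, …, nodes n` consecutively joined by edges. -/
structure Route (G : MixedGraph V) (α β : V) where
  n : ℕ
  npos : 0 < n
  nodes : ℕ → V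
  steps : ℕ → Step
  first : nodes 0 = α
  last : nodes n = β
  valid : ∀ i, i < n → StepValid G (nodes i) (steps i) (nodes (i + 1))

/-- Arrowhead at the right end of a step. -/
def headInto (s : Step) : Prop := s = Step.fwd ∨ s = Step.bi

/-- Arrowhead at the left end of a step. -/
def headOut (s : Step) : Prop := s = Step.bwd ∨ s = Step.bi

variable {G : MixedGraph V} {α β : V}

/-- The interior node at position `i` (with `0 < i < n`) is a collider:
an arrowhead into it on at least one side, and on each side either an
arrowhead into it or an undirected edge. -/
def Route.IsCollider (r : Route G α β) (i : ℕ) : Prop :=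
  (headInto (r.steps (i - 1)) ∨ headOut (r.steps i)) ∧
  (headInto (r.steps (i - 1)) ∨ r.steps (i - 1) = Step.un) ∧
  (headOut (r.steps i) ∨ r.steps i = Step.un)

/-- `a` is an ancestor of the set `Z` (or belongs to it). -/
def Anc (G : MixedGraph V) (Z : Set V) (a : V) : Prop :=
  ∃ z ∈ Z, Relation.ReflTransGen G.dir a z

/-- Path-based connection criterion given `Z`. -/
def Route.PathConnecting (r : Route G α β) (Z : Set V) : Prop :=
  ∀ i, 0 < i → i < r.n →
    (r.IsCollider i → Anc G Z (r.nodes i)) ∧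
    (¬ r.IsCollider i →
      r.nodes i ∉ Z ∨
      (r.steps (i - 1) = Step.un ∧ r.steps i = Step.un ∧
        ((∃ p, G.dir p (r.nodes i) ∧ p ∉ Z) ∨ ∃ s, G.bidir s (r.nodes i))))

/-- Route-based connection criterion given `Z`. -/
def Route.RouteConnecting (r : Route G α β) (Z : Set V) : Prop :=
  ∀ i, 0 < i → i < r.n →
    (r.IsCollider i → r.nodes i ∈ Z) ∧
    (¬ r.IsCollider i →
      r.nodes i ∉ Z ∨
      (r.steps (i - 1) = Step.un ∧ r.steps i = Step.un ∧ ∃ s, G.bidir s (r.nodes i)))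

/-- A route is a path when its nodes are all distinct. -/
def Route.IsPath (r : Route G α β) : Prop :=
  ∀ i j, i ≤ r.n → j ≤ r.n → r.nodes i = r.nodes j → i = j

/-- A directed route from `α` to `β` (all edges directed towards `β`). -/
def Route.AllFwd (r : Route G α β) : Prop := ∀ i, i < r.n → r.steps i = Step.fwd

/-- `X` is separated from `Y` given `Z`: no connecting path between them. -/
def Separated (G : MixedGraph V) (X Y Z : Set V) : Prop :=
  ∀ a ∈ X, ∀ b ∈ Y, ¬ ∃ r : Route G a b, r.IsPath ∧ r.PathConnecting Z

/-- There is an undirected path `a − v₁ − … − vₙ − b` with all `vᵢ ∈ S`, `n ≥ 1`. -/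
def UndirThrough (G : MixedGraph V) (S : Set V) (a b : V) : Prop :=
  ∃ c d, c ∈ S ∧ d ∈ S ∧ G.undir a c ∧ G.undir d b ∧
    Relation.ReflTransGen (fun x y => x ∈ S ∧ y ∈ S ∧ G.undir x y) c d

/-- The intervention of `X` on `G`: delete directed/bidirected edges into `X`,
add undirected shortcuts through `X`, delete undirected edges at `X`. -/
def intervene (G : MixedGraph V) (X : Set V) : MixedGraph V where
  dir a b := G.dir a b ∧ b ∉ X
  bidir a b := G.bidir a b ∧ a ∉ X ∧ b ∉ X
  undir a b := a ∉ X ∧ b ∉ X ∧ (G.undir a b ∨ UndirThrough G X a b)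

/-- Adjacency by an edge of any type. -/
def Adjacent (G : MixedGraph V) (a b : V) : Prop :=
  G.dir a b ∨ G.dir b a ∨ G.undir a b ∨ G.undir b a ∨ G.bidir a b ∨ G.bidir b a

/-- Delete all directed edges into and out of `X`. -/
def dropDirAt (G : MixedGraph V) (X : Set V) : MixedGraph V where
  dir a b := G.dir a b ∧ a ∉ X ∧ b ∉ X
  undir := G.undir
  bidir := G.bidir

/-- Induced subgraph on `W`. -/
def induce (G : MixedGraph V) (W : Set V) : MixedGraph V where
  dir a b := a ∈ W ∧ b ∈ W ∧ G.dir a b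
  undir a b := a ∈ W ∧ b ∈ W ∧ G.undir a b
  bidir a b := a ∈ W ∧ b ∈ W ∧ G.bidir a b

/-- The marginal graph `G^X`: edges among `X`, with undirected edges added for
undirected paths through `Xᶜ`. -/
def marginal (G : MixedGraph V) (X : Set V) : MixedGraph V where
  dir a b := a ∈ X ∧ b ∈ X ∧ G.dir a b
  bidir a b := a ∈ X ∧ b ∈ X ∧ G.bidir a b
  undir a b := a ∈ X ∧ b ∈ X ∧ (G.undir a b ∨ UndirThrough G Xᶜ a b)

/-- `W'` is an ancestral set. -/
def Ancestral (G : MixedGraph V) (W' : Set V) : Prop :=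
  ∀ a b, G.dir a b → b ∈ W' → a ∈ W'

/-- `a` and `b` are joined by an undirected path lying within `W`. -/
def uconnIn (G : MixedGraph V) (W : Set V) (a b : V) : Prop :=
  a ∈ W ∧ b ∈ W ∧ Relation.ReflTransGen (fun x y => x ∈ W ∧ y ∈ W ∧ G.undir x y) a b

/-- `𝒮` is the set of components of `W`: the equivalence classes of
undirected connectivity within the subgraph induced by `W`. -/
def IsComponents (G : MixedGraph V) (W : Set V) (𝒮 : Finset (Finset V)) : Prop :=
  (∀ S ∈ 𝒮, ∃ a ∈ W, ∀ b, b ∈ S ↔ uconnIn G W a b) ∧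
  (∀ a ∈ W, ∃ S ∈ 𝒮, a ∈ S) ∧
  (∀ S ∈ 𝒮, ∀ T ∈ 𝒮, S ≠ T → Disjoint S T)

/-- `L` is a topological order of `W` with respect to the directed part of `G`. -/
def TopOrder [DecidableEq V] (G : MixedGraph V) (W : Set V) (L : List V) : Prop :=
  L.Nodup ∧ (∀ v, v ∈ L ↔ v ∈ W) ∧
  ∀ a b, a ∈ W → b ∈ W → G.dir a b → L.idxOf a < L.idxOf b

/-- The predecessors of `a` in the order `L`. -/
def predSet [DecidableEq V] (L : List V) (a : V) : Set V :=
  {b | b ∈ L ∧ L.idxOf b < L.idxOf a}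

/-- Ancestors of the set `Y` (including `Y`). -/
def AnSet (G : MixedGraph V) (Y : Set V) : Set V :=
  {a | ∃ y ∈ Y, Relation.ReflTransGen G.dir a y}

/-- Descendants of `a` (including `a`). -/
def Desc (G : MixedGraph V) (a b : V) : Prop := Relation.ReflTransGen G.dir a b

/-- The magnification of an ADMG: `A ↔ B` becomes `A ← λ_{AB} → B`,
every `A` gets `ε_A → A`, and `A − B` becomes `ε_A − ε_B`.
Nodes: `Sum.inl a` original, `Sum.inr (Sum.inl a)` is `ε_a`,
`Sum.inr (Sum.inr p)` is `λ_p`. -/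
def magnify (G : MixedGraph V) : MixedGraph (V ⊕ (V ⊕ Sym2 V)) where
  dir x y :=
    match x, y with
    | Sum.inl a, Sum.inl b => G.dir a b
    | Sum.inr (Sum.inl a), Sum.inl b => a = b
    | Sum.inr (Sum.inr p), Sum.inl b => ∃ c, p = s(b, c) ∧ G.bidir b c
    | _, _ => False
  undir x y :=
    match x, y with
    | Sum.inr (Sum.inl a), Sum.inr (Sum.inl b) => G.undir a b
    | _, _ => False
  bidir _ _ := False

/-- Replacing each bidirected edge `A ↔ B` with `A ← λ_{AB} → B` only. -/
def magBi (G : MixedGraph V) : MixedGraph (V ⊕ Sym2 V) where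
  dir x y :=
    match x, y with
    | Sum.inl a, Sum.inl b => G.dir a b
    | Sum.inr p, Sum.inl b => ∃ c, p = s(b, c) ∧ G.bidir b c
    | _, _ => False
  undir x y :=
    match x, y with
    | Sum.inl a, Sum.inl b => G.undir a b
    | _, _ => False
  bidir _ _ := False

/-- The back-door criterion of the set `S` relative to `(Xs, Ys)`:
`S` contains no descendant of `Xs` and blocks every non-directed path
from `Xs` to `Ys`. -/
def BackDoor (G : MixedGraph V) (S Xs Ys : Set V) : Prop :=
  (∀ a ∈ Xs, ∀ v ∈ S, ¬ Desc G a v) ∧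
  (∀ a ∈ Xs, ∀ b ∈ Ys, ∀ r : Route G a b, r.IsPath → ¬ r.AllFwd →
    ¬ r.PathConnecting S)

section SEM

variable [Fintype V]

/-- Integral over assignments of real values to the coordinates in `S`. -/
def intOver (S : Set V) (g : ((↥S) → ℝ) → ℝ) : ℝ :=
  letI : Fintype ↥S := Fintype.ofFinite _
  ∫ z : (↥S) → ℝ, g z

/-- Marginal density over the coordinates in `S`: integrate out `Sᶜ`. -/
def marg (p : (V → ℝ) → ℝ) (S : Set V) (x : V → ℝ) : ℝ :=
  intOver (Sᶜ) (fun y => p (fun v => if h : v ∈ Sᶜ then y ⟨v, h⟩ else x v))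

/-- Override the assignment `x` on `S` by `z`. -/
def ovr (x : V → ℝ) (S : Set V) (z : (↥S) → ℝ) : V → ℝ :=
  fun v => if h : v ∈ S then z ⟨v, h⟩ else x v

/-- Multivariate Gaussian density with mean 0 and precision matrix `Sinv`. -/
def gaussDensity (Sinv : Matrix V V ℝ) (u : V → ℝ) : ℝ :=
  Real.sqrt (Sinv.det / (2 * Real.pi) ^ (Fintype.card V)) *
    Real.exp (-(∑ i, ∑ j, u i * Sinv i j * u j) / 2)

/-- A causal model of an aADMG `G`: structural equations `A = f_A(Pa(A)) + ε_A`
with jointly Gaussian errors whose precision matrix has zeros for missing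
undirected edges. -/
structure GaussSEM (G : MixedGraph V) where
  f : V → (V → ℝ) → ℝ
  f_parents : ∀ A x y, (∀ B, G.dir B A → x B = y B) → f A x = f A y
  Sinv : Matrix V V ℝ
  symm : Sinv.IsSymm
  posdef : Sinv.PosDef
  zeros : ∀ A B, A ≠ B → ¬ G.undir A B → Sinv A B = 0

namespace GaussSEM

variable {G : MixedGraph V} (M : GaussSEM G)

/-- Error density. -/
def q : (V → ℝ) → ℝ := gaussDensity M.Sinv

/-- Error values recovered from an assignment. -/
def errs (x : V → ℝ) : V → ℝ := fun i => x i - M.f i x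

/-- Observational joint density over `V`. -/
def obs (x : V → ℝ) : ℝ := M.q (M.errs x)

/-- Observational conditional density `p(A | B)`. -/
def cond (A B : Set V) (x : V → ℝ) : ℝ :=
  marg M.obs (A ∪ B) x / marg M.obs B x

/-- Post-interventional density of `V \ Xset` under `do(Xset := x on Xset)`:
the errors of the intervened variables are marginalized out. -/
def doDensity (Xset : Set V) (x : V → ℝ) : ℝ :=
  marg M.q (Xsetᶜ) (M.errs x)

/-- Post-interventional conditional density `p(A | do(Xset), B)`. -/
def doCond (Xset A B : Set V) (x : V → ℝ) : ℝ :=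
  marg (M.doDensity Xset) (Xset ∪ A ∪ B) x / marg (M.doDensity Xset) (Xset ∪ B) x

/-- Conditional density of the errors in `A` given the errors in `B`. -/
def qcond (A B : Set V) (u : V → ℝ) : ℝ :=
  marg M.q (A ∪ B) u / marg M.q B u

/-- The factor `Q(S | W')`: conditional density of the errors of `S` given the
errors of `W'`, evaluated at the errors recovered from the assignment. -/
def QFactor (S W' : Set V) (x : V → ℝ) : ℝ := M.qcond S W' (M.errs x)

end GaussSEM

/-- A causal effect (a functional of the model) is identifiable when it is a
fixed functional of the observational density, uniformly over all models of `G`. -/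
def Identifiable (G : MixedGraph V) (eff : GaussSEM G → (V → ℝ) → ℝ) : Prop :=
  ∃ F : ((V → ℝ) → ℝ) → (V → ℝ) → ℝ, ∀ M : GaussSEM G, eff M = F M.obs

end SEM

end MixedGraph

namespace MixedGraph

variable {V : Type*}

/-- Collider shape of a pair of consecutive steps. -/
def colliderAt (s t : Step) : Prop :=
  (headInto s ∨ headOut t) ∧ (headInto s ∨ s = Step.un) ∧ (headOut t ∨ t = Step.un)

lemma isCollider_iff {G : MixedGraph V} {α β : V} (r : Route G α β) (i : ℕ) :
    r.IsCollider i ↔ colliderAt (r.steps (i - 1)) (r.steps i) := Iff.rfl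

/-- First step of the transform of a step. -/
def transStep : Step → Step
  | Step.bi => Step.bwd
  | s => s

/-- Last step of the transform of a step. -/
def lastTrans : Step → Step
  | Step.bi => Step.fwd
  | s => s

lemma colliderAt_trans (a b : Step) :
    colliderAt (lastTrans a) (transStep b) ↔ colliderAt a b := by
  cases a <;> cases b <;>
    simp [colliderAt, lastTrans, transStep, headInto, headOut]

lemma inl_mem_image_iff {Z : Set V} (x : V) :
    (Sum.inl x : V ⊕ Sym2 V) ∈ (Sum.inl '' Z : Set (V ⊕ Sym2 V)) ↔ x ∈ Z := by
  simp

lemma inr_not_mem_image {Z : Set V} (p : Sym2 V) :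
    (Sum.inr p : V ⊕ Sym2 V) ∉ (Sum.inl '' Z : Set (V ⊕ Sym2 V)) := by
  simp

/-- Appending two connecting routes with a good junction. -/
lemma route_append {V' : Type*} {G' : MixedGraph V'} {a m b : V'} (Z' : Set V')
    (r1 : Route G' a m) (r2 : Route G' m b)
    (h1 : r1.RouteConnecting Z') (h2 : r2.RouteConnecting Z')
    (hjc : colliderAt (r1.steps (r1.n - 1)) (r2.steps 0) → m ∈ Z')
    (hjn : ¬ colliderAt (r1.steps (r1.n - 1)) (r2.steps 0) →
      m ∉ Z' ∨ (r1.steps (r1.n - 1) = Step.un ∧ r2.steps 0 = Step.un ∧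
        ∃ s, G'.bidir s m)) :
    ∃ r : Route G' a b, r.RouteConnecting Z' ∧ r.steps 0 = r1.steps 0 := by
  have hn1 := r1.npos
  have hn2 := r2.npos
  refine ⟨⟨r1.n + r2.n, by omega,
    fun i => if i < r1.n then r1.nodes i else r2.nodes (i - r1.n),
    fun i => if i < r1.n then r1.steps i else r2.steps (i - r1.n),
    by simp [hn1, r1.first],
    by
      have h : ¬ (r1.n + r2.n < r1.n) := by omega
      simp only [if_neg h]
      rw [show r1.n + r2.n - r1.n = r2.n by omega]
      exact r2.last,
    ?_⟩, ?_, by simp [hn1]⟩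
  · intro i hi
    by_cases h : i < r1.n
    · simp only [if_pos h]
      by_cases h' : i + 1 < r1.n
      · simp only [if_pos h']
        exact r1.valid i h
      · have hi1 : i + 1 = r1.n := by omega
        simp only [if_neg h']
        have he : r2.nodes (i + 1 - r1.n) = r1.nodes (i + 1) := by
          rw [hi1]
          simp only [Nat.sub_self]
          rw [r2.first, r1.last]
        rw [he]
        exact r1.valid i h
    · have h1n : ¬ (i + 1 < r1.n) := by omega
      simp only [if_neg h, if_neg h1n]
      rw [show i + 1 - r1.n = (i - r1.n) + 1 by omega]
      exact r2.valid (i - r1.n) (by omega)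
  · intro i hi0 hin
    simp only at hin
    by_cases hlt : i < r1.n
    · -- interior of r1
      have hi1 : i - 1 < r1.n := by omega
      have hsc : ∀ P : Step → Step → V' → Prop,
          P (if i - 1 < r1.n then r1.steps (i-1) else r2.steps (i-1-r1.n))
            (if i < r1.n then r1.steps i else r2.steps (i - r1.n))
            (if i < r1.n then r1.nodes i else r2.nodes (i - r1.n)) =
          P (r1.steps (i-1)) (r1.steps i) (r1.nodes i) := by
        intro P; rw [if_pos hi1, if_pos hlt, if_pos hlt]
      constructor
      · intro hc
        simp only [Route.IsCollider, if_pos hi1, if_pos hlt] at hc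
        simp only [if_pos hlt]
        exact (h1 i hi0 hlt).1 hc
      · intro hc
        simp only [Route.IsCollider, if_pos hi1, if_pos hlt] at hc
        simp only [if_pos hi1, if_pos hlt]
        exact (h1 i hi0 hlt).2 hc
    · by_cases heq : i = r1.n
      · -- junction
        subst heq
        have hi1 : r1.n - 1 < r1.n := by omega
        have hnn : ¬ (r1.n < r1.n) := by omega
        have hm : r2.nodes 0 = m := r2.first
        constructor
        · intro hc
          simp only [Route.IsCollider, if_pos hi1, if_neg hnn, Nat.sub_self] at hc
          simp only [if_neg hnn, Nat.sub_self, hm]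
          exact hjc hc
        · intro hc
          simp only [Route.IsCollider, if_pos hi1, if_neg hnn, Nat.sub_self] at hc
          simp only [if_pos hi1, if_neg hnn, Nat.sub_self, hm]
          exact hjn hc
      · -- interior of r2
        have hgt : r1.n < i := by omega
        have hi1 : ¬ (i - 1 < r1.n) := by omega
        have hab : i - 1 - r1.n = (i - r1.n) - 1 := by omega
        have h20 : 0 < i - r1.n := by omega
        have h2n : i - r1.n < r2.n := by omega
        constructor
        · intro hc
          simp only [Route.IsCollider, if_neg hi1, if_neg hlt, hab] at hc
          simp only [if_neg hlt]
          exact (h2 (i - r1.n) h20 h2n).1 hc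
        · intro hc
          simp only [Route.IsCollider, if_neg hi1, if_neg hlt, hab] at hc
          simp only [if_neg hi1, if_neg hlt, hab]
          exact (h2 (i - r1.n) h20 h2n).2 hc

/-- A one-step route. -/
lemma single_route {V' : Type*} (G' : MixedGraph V') (x y : V') (s : Step)
    (hv : StepValid G' x s y) (Z' : Set V') :
    ∃ T : Route G' x y, T.RouteConnecting Z' ∧ T.n = 1 ∧
      T.steps 0 = s ∧ T.steps (T.n - 1) = s := by
  refine ⟨⟨1, one_pos, fun i => if i = 0 then x else y, fun _ => s, by simp, by simp, ?_⟩,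
    ?_, rfl, rfl, rfl⟩
  · intro i hi
    have : i = 0 := by omega
    subst this
    simpa using hv
  · intro i hi0 hin
    simp only at hin
    omega

/-- A two-step route with a non-collider or in-`Z'` middle node. -/
lemma two_route {V' : Type*} (G' : MixedGraph V') (x m y : V') (s t : Step)
    (hv1 : StepValid G' x s m) (hv2 : StepValid G' m t y) (Z' : Set V')
    (hm2 : colliderAt s t → m ∈ Z')
    (hm : ¬ colliderAt s t → m ∉ Z') :
    ∃ T : Route G' x y, T.RouteConnecting Z' ∧ T.n = 2 ∧
      T.steps 0 = s ∧ T.steps (T.n - 1) = t := by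
  refine ⟨⟨2, by omega, fun i => if i = 0 then x else if i = 1 then m else y,
    fun i => if i = 0 then s else t, by simp, by simp, ?_⟩, ?_, rfl, rfl, rfl⟩
  · intro i hi
    interval_cases i
    · simpa using hv1
    · simpa using hv2
  · intro i hi0 hin
    simp only at hin
    have : i = 1 := by omega
    subst this
    constructor
    · intro hc
      exact hm2 hc
    · intro hc
      exact Or.inl (hm hc)

/-- Does node `k` of the route need a detour through a `λ` node? -/
def needsD {α β : V} (G : MixedGraph V) (r : Route G α β) (Z : Set V) (k : ℕ) : Prop :=
  0 < k ∧ r.steps (k - 1) = Step.un ∧ r.steps k = Step.un ∧ r.nodes k ∈ Z ∧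
    ∃ s, G.bidir s (r.nodes k)

/-- The gadget route in `magBi G` replacing a single step of `r`. -/
lemma gadget {α β : V} (G : MixedGraph V) (hG : G.WellFormed) (Z : Set V)
    (r : Route G α β) (k : ℕ) (hk : k < r.n) :
    ∃ Gd : Route (magBi G) (Sum.inl (r.nodes k)) (Sum.inl (r.nodes (k + 1))),
      Gd.RouteConnecting (Sum.inl '' Z) ∧ Gd.steps 0 = transStep (r.steps k) ∧
      Gd.steps (Gd.n - 1) = lastTrans (r.steps k) := by
  have hv := r.valid k hk
  cases h : r.steps k with
  | fwd =>
    rw [h] at hv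
    obtain ⟨T, hT, -, h0, hl⟩ := single_route (magBi G) (Sum.inl (r.nodes k))
      (Sum.inl (r.nodes (k+1))) Step.fwd (by simpa [StepValid, magBi] using hv)
      (Sum.inl '' Z)
    exact ⟨T, hT, by rw [h0]; rfl, by rw [hl]; rfl⟩
  | bwd =>
    rw [h] at hv
    obtain ⟨T, hT, -, h0, hl⟩ := single_route (magBi G) (Sum.inl (r.nodes k))
      (Sum.inl (r.nodes (k+1))) Step.bwd (by simpa [StepValid, magBi] using hv)
      (Sum.inl '' Z)
    exact ⟨T, hT, by rw [h0]; rfl, by rw [hl]; rfl⟩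
  | un =>
    rw [h] at hv
    obtain ⟨T, hT, -, h0, hl⟩ := single_route (magBi G) (Sum.inl (r.nodes k))
      (Sum.inl (r.nodes (k+1))) Step.un (by simpa [StepValid, magBi] using hv)
      (Sum.inl '' Z)
    exact ⟨T, hT, by rw [h0]; rfl, by rw [hl]; rfl⟩
  | bi =>
    rw [h] at hv
    have hv' : G.bidir (r.nodes k) (r.nodes (k+1)) := hv
    have hv1 : StepValid (magBi G) (Sum.inl (r.nodes k)) Step.bwd
        (Sum.inr (s(r.nodes k, r.nodes (k+1))) : V ⊕ Sym2 V) := by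
      show (magBi G).dir _ _
      exact ⟨r.nodes (k+1), rfl, hv'⟩
    have hv2 : StepValid (magBi G) (Sum.inr (s(r.nodes k, r.nodes (k+1))) : V ⊕ Sym2 V)
        Step.fwd (Sum.inl (r.nodes (k+1))) := by
      show (magBi G).dir _ _
      exact ⟨r.nodes k, Sym2.eq_swap, hG.2.1 _ _ hv'⟩
    obtain ⟨T, hT, -, h0, hl⟩ := two_route (magBi G) _ _ _ Step.bwd Step.fwd hv1 hv2
      (Sum.inl '' Z)
      (fun hc => absurd hc (by simp [colliderAt, headInto, headOut]))
      (fun _ => inr_not_mem_image _)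
    exact ⟨T, hT, by rw [h0]; rfl, by rw [hl]; rfl⟩

/-- Prepending a detour `C ← λ → C` to a route starting with an undirected step. -/
lemma detour_prepend (G : MixedGraph V) (hG : G.WellFormed) {Z : Set V} {C : V}
    {y : V ⊕ Sym2 V} (s : V) (hb : G.bidir s C) (hC : C ∈ Z)
    (R : Route (magBi G) (Sum.inl C) y) (hR : R.RouteConnecting (Sum.inl '' Z))
    (h0 : R.steps 0 = Step.un) :
    ∃ T : Route (magBi G) (Sum.inl C) y,
      T.RouteConnecting (Sum.inl '' Z) ∧ T.steps 0 = Step.bwd := by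
  have hdir : (magBi G).dir (Sum.inr (s(C, s)) : V ⊕ Sym2 V) (Sum.inl C) :=
    ⟨s, rfl, hG.2.1 _ _ hb⟩
  obtain ⟨D, hD, hDn, hD0, hDl⟩ := two_route (magBi G) (Sum.inl C)
    (Sum.inr (s(C, s)) : V ⊕ Sym2 V) (Sum.inl C) Step.bwd Step.fwd hdir hdir
    (Sum.inl '' Z)
    (fun hc => absurd hc (by simp [colliderAt, headInto, headOut]))
    (fun _ => inr_not_mem_image _)
  have hcol : colliderAt (D.steps (D.n - 1)) (R.steps 0) := by
    rw [hDl, h0]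
    exact ⟨Or.inl (Or.inl rfl), Or.inl (Or.inl rfl), Or.inr rfl⟩
  obtain ⟨T, hT, hT0⟩ := route_append (Sum.inl '' Z) D R hD hR
    (fun _ => (inl_mem_image_iff C).2 hC) (fun hnc => absurd hcol hnc)
  exact ⟨T, hT, by rw [hT0, hD0]⟩

/-- Main inductive construction. -/
lemma magBi_key {α β : V} (G : MixedGraph V) (hG : G.WellFormed) (Z : Set V)
    (r : Route G α β) (hr : r.RouteConnecting Z) :
    ∀ j k, k < r.n → r.n - k = j + 1 →
    ∃ T : Route (magBi G) (Sum.inl (r.nodes k)) (Sum.inl β),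
      T.RouteConnecting (Sum.inl '' Z) ∧
      T.steps 0 = (if needsD G r Z k then Step.bwd else transStep (r.steps k)) := by
  intro j
  induction j with
  | zero =>
    intro k hk hnk
    have hk1 : k + 1 = r.n := by omega
    obtain ⟨Gd, hGd, hGd0, hGdl⟩ := gadget G hG Z r k hk
    rw [show (Sum.inl β : V ⊕ Sym2 V) = Sum.inl (r.nodes (k + 1)) by rw [hk1, r.last]]
    by_cases hd : needsD G r Z k
    · obtain ⟨hk0, hu1, hu2, hmem, s, hbs⟩ := hd
      have h0 : Gd.steps 0 = Step.un := by rw [hGd0, hu2]; rfl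
      obtain ⟨T, hT, hT0⟩ := detour_prepend G hG s hbs hmem Gd hGd h0
      exact ⟨T, hT, by rw [if_pos ⟨hk0, hu1, hu2, hmem, s, hbs⟩, hT0]⟩
    · exact ⟨Gd, hGd, by rw [if_neg hd]; exact hGd0⟩
  | succ j ih =>
    intro k hk hnk
    have hk1 : k + 1 < r.n := by omega
    obtain ⟨T', hT', hT'0⟩ := ih (k + 1) hk1 (by omega)
    obtain ⟨Gd, hGd, hGd0, hGdl⟩ := gadget G hG Z r k hk
    have hjunc : (colliderAt (Gd.steps (Gd.n - 1)) (T'.steps 0) →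
        (Sum.inl (r.nodes (k+1)) : V ⊕ Sym2 V) ∈ Sum.inl '' Z) ∧
        (¬ colliderAt (Gd.steps (Gd.n - 1)) (T'.steps 0) →
          (Sum.inl (r.nodes (k+1)) : V ⊕ Sym2 V) ∉ Sum.inl '' Z ∨
          (Gd.steps (Gd.n - 1) = Step.un ∧ T'.steps 0 = Step.un ∧
            ∃ s, (magBi G).bidir s (Sum.inl (r.nodes (k+1))))) := by
      by_cases hd' : needsD G r Z (k + 1)
      · have hcol : colliderAt (Gd.steps (Gd.n - 1)) (T'.steps 0) := by
          rw [hGdl, hT'0, if_pos hd']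
          have hu : r.steps k = Step.un := by
            have := hd'.2.1
            simpa using this
          rw [hu]
          exact ⟨Or.inr (Or.inl rfl), Or.inr rfl, Or.inl (Or.inl rfl)⟩
        refine ⟨fun _ => (inl_mem_image_iff _).2 hd'.2.2.2.1,
          fun hnc => absurd hcol hnc⟩
      · have hT'0' : T'.steps 0 = transStep (r.steps (k + 1)) := by
          rw [hT'0, if_neg hd']
        have hciff : colliderAt (Gd.steps (Gd.n - 1)) (T'.steps 0) ↔
            r.IsCollider (k + 1) := by
          rw [hGdl, hT'0', colliderAt_trans, isCollider_iff]
          simp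
        constructor
        · intro hc
          exact (inl_mem_image_iff _).2 ((hr (k+1) (by omega) hk1).1 (hciff.1 hc))
        · intro hnc
          have hnc' : ¬ r.IsCollider (k + 1) := fun h => hnc (hciff.2 h)
          rcases (hr (k+1) (by omega) hk1).2 hnc' with hmem | ⟨hu1, hu2, s, hbs⟩
          · exact Or.inl (fun h => hmem ((inl_mem_image_iff _).1 h))
          · by_cases hmZ : r.nodes (k + 1) ∈ Z
            · exact absurd ⟨by omega, hu1, hu2, hmZ, s, hbs⟩ hd'
            · exact Or.inl (fun h => hmZ ((inl_mem_image_iff _).1 h))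
    obtain ⟨R1, hR1, hR10⟩ := route_append (Sum.inl '' Z) Gd T' hGd hT'
      hjunc.1 hjunc.2
    have hR10' : R1.steps 0 = transStep (r.steps k) := by rw [hR10, hGd0]
    by_cases hd : needsD G r Z k
    · obtain ⟨hk0, hu1, hu2, hmem, s, hbs⟩ := hd
      have h0 : R1.steps 0 = Step.un := by rw [hR10', hu2]; rfl
      obtain ⟨T, hT, hT0⟩ := detour_prepend G hG s hbs hmem R1 hR1 h0
      exact ⟨T, hT, by rw [if_pos ⟨hk0, hu1, hu2, hmem, s, hbs⟩, hT0]⟩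
    · exact ⟨R1, hR1, by rw [if_neg hd]; exact hR10'⟩

end MixedGraph

open MixedGraph in
/-- A connecting route in an ADMG transforms into a connecting route in the
graph obtained by replacing each bidirected edge `A ↔ B` with `A ← λ_{AB} → B`. -/
theorem route_connecting_magBi
    {V : Type*} [Fintype V] (G : MixedGraph V) (hG : G.WellFormed)
    (α β : V) (Z : Set V) (hα : α ∉ Z) (hβ : β ∉ Z)
    (r : Route G α β) (hr : r.RouteConnecting Z) :
    ∃ r' : Route (magBi G) (Sum.inl α) (Sum.inl β),
      r'.RouteConnecting (Sum.inl '' Z) := by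
  have hn := r.npos
  obtain ⟨T, hT, -⟩ := magBi_key G hG Z r hr (r.n - 1) 0 hn (by omega)
  rw [← r.first]
  exact ⟨T, hT⟩
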